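/- For every integer $n \geq 2$ and all positive reals $x_1, \dots, x_n$, one has $\log\left(\frac{1}{n}\sum_{i=1}^n x_i\right) \geq \frac{1}{n}\sum_{i=1}^n \log x_i + \frac{1}{2n(n-1)} \sum_{i \neq j} \left(\frac{x_i - x_j}{x_i + x_j}\right)^2$. -/

import Mathlib

open Finset

/-- Second-order refinement of Jensen's inequality for the logarithm. -/
lemma pairwise_log (a b : ℝ) (ha : 0 < a) (hb : 0 < b) :
    (Real.log a + Real.log b)/2 + (1/2) * ((a-b)/(a+b))^2 ≤ Real.log ((a+b)/2) := by
  have hab : 0 < a + b := by linarith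
  have hs : ((a-b)/(a+b))^2 < 1 := by
    rw [div_pow, div_lt_one (by positivity)]
    nlinarith
  have hpos : 0 < 1 - ((a-b)/(a+b))^2 := by linarith
  have h1 : Real.log (1 - ((a-b)/(a+b))^2) ≤ -((a-b)/(a+b))^2 := by
    have := Real.log_le_sub_one_of_pos hpos
    linarith
  have heq : 1 - ((a-b)/(a+b))^2 = (4*a*b)/(a+b)^2 := by
    field_simp; ring
  have hL : Real.log ((4*a*b)/(a+b)^2)
      = Real.log 4 + Real.log a + Real.log b - 2 * Real.log (a+b) := by
    rw [Real.log_div (by positivity) (by positivity), Real.log_mul (by positivity) hb.ne',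
      Real.log_mul (by norm_num) ha.ne', Real.log_pow]
    push_cast; ring
  have h4 : Real.log 4 = 2 * Real.log 2 := by
    rw [show (4:ℝ) = 2^2 by norm_num, Real.log_pow]; push_cast; ring
  have h2 : Real.log ((a+b)/2) = Real.log (a+b) - Real.log 2 :=
    Real.log_div hab.ne' two_ne_zero
  rw [heq] at h1
  linarith

theorem log_jensen_second_order (n : ℕ) (hn : 2 ≤ n) (x : Fin n → ℝ)
    (hx : ∀ i, 0 < x i) :
    Real.log ((∑ i, x i) / n) ≥
      (∑ i, Real.log (x i)) / n +
        (1 / (2 * n * (n - 1))) *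
          ∑ i, ∑ j, (if i ≠ j then ((x i - x j) / (x i + x j)) ^ 2 else 0) := by
  have hN2 : (2:ℝ) ≤ (n:ℝ) := by exact_mod_cast hn
  have hN : (0:ℝ) < (n:ℝ) := by linarith
  have hN1 : (0:ℝ) < (n:ℝ) - 1 := by linarith
  set t : Finset (Fin n × Fin n) := (univ : Finset (Fin n)).offDiag with ht
  have hconv : ∀ f : Fin n × Fin n → ℝ,
      ∑ p ∈ t, f p = ∑ i, ∑ j, if i ≠ j then f (i,j) else 0 := by
    intro f
    rw [ht, show (univ : Finset (Fin n)).offDiag = (univ ×ˢ univ).filter (fun a : Fin n × Fin n => a.1 ≠ a.2) by ext; simp [Finset.mem_offDiag], Finset.sum_filter,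
      ← Finset.sum_product' (f := fun i j => if i ≠ j then f (i,j) else 0)]
  have hrow : ∀ (f : Fin n → ℝ) (i : Fin n),
      ∑ j, (if i ≠ j then f j else 0) = (∑ j, f j) - f i := by
    intro f i
    have h1 : ∀ j, (if i ≠ j then f j else 0) = f j - (if i = j then f j else 0) := by
      intro j; by_cases h : i = j <;> simp [h]
    simp_rw [h1, Finset.sum_sub_distrib, Finset.sum_ite_eq, Finset.mem_univ, if_true]
  have hcard : (t.card : ℝ) = (n:ℝ) * ((n:ℝ) - 1) := by
    have h : n ≤ n * n := by nlinarith
    rw [ht, Finset.offDiag_card, Finset.card_univ, Fintype.card_fin]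
    push_cast [Nat.cast_sub h]
    ring
  have hgen : ∀ f : Fin n → ℝ,
      ∑ p ∈ t, (f p.1 + f p.2) = 2*((n:ℝ)-1) * ∑ i, f i := by
    intro f
    rw [hconv (fun p => f p.1 + f p.2)]
    have h1 : ∀ i : Fin n, ∑ j, (if i ≠ j then f i + f j else 0)
        = (∑ j, (f i + f j)) - (f i + f i) := fun i => hrow (fun j => f i + f j) i
    have h2 : ∀ i : Fin n, (∑ j, (f i + f j)) - (f i + f i)
        = ((n:ℝ)-2) * f i + ∑ j, f j := by
      intro i
      rw [Finset.sum_add_distrib, Finset.sum_const, Finset.card_univ, Fintype.card_fin,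
        nsmul_eq_mul]
      ring
    simp_rw [h1, h2, Finset.sum_add_distrib, ← Finset.mul_sum, Finset.sum_const,
      Finset.card_univ, Fintype.card_fin, nsmul_eq_mul]
    ring
  -- Jensen
  have hw : ∀ p ∈ t, (0:ℝ) ≤ 1/((n:ℝ)*((n:ℝ)-1)) := by
    intro p _; positivity
  have hw1 : ∑ _p ∈ t, (1/((n:ℝ)*((n:ℝ)-1))) = 1 := by
    rw [Finset.sum_const, nsmul_eq_mul, hcard]
    field_simp
  have hmem : ∀ p ∈ t, (x p.1 + x p.2)/2 ∈ Set.Ioi (0:ℝ) := by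
    intro p _
    have := hx p.1; have := hx p.2
    simp only [Set.mem_Ioi]; linarith
  have jensen := (strictConcaveOn_log_Ioi.concaveOn).le_map_sum hw hw1 hmem
  simp only [smul_eq_mul] at jensen
  -- rewrite the RHS of jensen
  have hR : ∑ p ∈ t, (1/((n:ℝ)*((n:ℝ)-1))) * ((x p.1 + x p.2)/2) = (∑ i, x i)/(n:ℝ) := by
    have h1 : ∀ p : Fin n × Fin n, (1/((n:ℝ)*((n:ℝ)-1))) * ((x p.1 + x p.2)/2)
        = (1/(2*(n:ℝ)*((n:ℝ)-1))) * (x p.1 + x p.2) := by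
      intro p
      rw [div_mul_eq_mul_div, div_mul_eq_mul_div, one_mul, one_mul,
        div_eq_div_iff (by positivity) (by positivity)]
      ring
    simp_rw [h1, ← Finset.mul_sum, hgen x]
    field_simp
  rw [hR] at jensen
  -- lower bound the LHS of jensen
  have hlow : ∀ p ∈ t,
      (1/((n:ℝ)*((n:ℝ)-1))) * ((Real.log (x p.1) + Real.log (x p.2))/2
        + (1/2) * ((x p.1 - x p.2)/(x p.1 + x p.2))^2)
      ≤ (1/((n:ℝ)*((n:ℝ)-1))) * Real.log ((x p.1 + x p.2)/2) := by
    intro p _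
    exact mul_le_mul_of_nonneg_left (pairwise_log _ _ (hx p.1) (hx p.2)) (by positivity)
  have hsum := Finset.sum_le_sum hlow
  -- compute the lower sum
  have hsplit : ∑ p ∈ t, (1/((n:ℝ)*((n:ℝ)-1))) * ((Real.log (x p.1) + Real.log (x p.2))/2
        + (1/2) * ((x p.1 - x p.2)/(x p.1 + x p.2))^2)
      = (1/(2*(n:ℝ)*((n:ℝ)-1))) * (∑ p ∈ t, (Real.log (x p.1) + Real.log (x p.2)))
        + (1/(2*(n:ℝ)*((n:ℝ)-1))) * ∑ p ∈ t, ((x p.1 - x p.2)/(x p.1 + x p.2))^2 := by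
    rw [Finset.mul_sum, Finset.mul_sum, ← Finset.sum_add_distrib]
    apply Finset.sum_congr rfl
    intro p _
    have h1 := hx p.1
    have h2 := hx p.2
    field_simp
  have hlogsum : ∑ p ∈ t, (Real.log (x p.1) + Real.log (x p.2))
      = 2*((n:ℝ)-1) * ∑ i, Real.log (x i) := hgen (fun i => Real.log (x i))
  have hD : ∑ p ∈ t, ((x p.1 - x p.2)/(x p.1 + x p.2))^2
      = ∑ i, ∑ j, (if i ≠ j then ((x i - x j) / (x i + x j)) ^ 2 else 0) :=
    hconv (fun p => ((x p.1 - x p.2)/(x p.1 + x p.2))^2)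
  rw [hsplit, hlogsum, hD] at hsum
  have hfin : (1/(2*(n:ℝ)*((n:ℝ)-1))) * (2*((n:ℝ)-1) * ∑ i, Real.log (x i))
      = (∑ i, Real.log (x i))/(n:ℝ) := by
    field_simp
  rw [hfin] at hsum
  exact le_trans hsum jensen
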